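/- The inclusion of the category of posets into the category of small categories preserves colimits of (possibly transfinite) sequences. -/

import Mathlib

open CategoryTheory Limits

universe u

namespace PartOrdSeqColim

variable {lam : Type u} [LinearOrder lam] (F : lam ⥤ PartOrd.{u})

/-- Apply a morphism of `PartOrd` as an order hom. -/
def ap {X Y : PartOrd.{u}} (f : X ⟶ Y) : X →o Y := f.hom

lemma hom_ext {X Y : PartOrd.{u}} {f g : X ⟶ Y} (h : ∀ x, ap f x = ap g x) : f = g :=
  PartOrd.hom_ext (DFunLike.ext (ap f) (ap g) h)

lemma ap_comp {X Y W : PartOrd.{u}} (f : X ⟶ Y) (g : Y ⟶ W) (x : X) :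
    ap (f ≫ g) x = ap g (ap f x) := rfl

/-- Transition maps of the diagram. -/
def tr {j k : lam} (h : j ≤ k) : F.obj j →o F.obj k := ap (F.map h.hom)

lemma tr_tr {j k m : lam} (h : j ≤ k) (h' : k ≤ m) (x : F.obj j) :
    tr F h' (tr F h x) = tr F (h.trans h') x := by
  have e : (homOfLE (h.trans h') : j ⟶ m) = homOfLE h ≫ homOfLE h' := rfl
  show _ = ap (F.map (homOfLE (h.trans h'))) x
  rw [e, F.map_comp]
  rfl

lemma tr_refl {j : lam} (x : F.obj j) : tr F (le_refl j) x = x := by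
  show ap (F.map (𝟙 j)) x = x
  rw [F.map_id]
  rfl

/-- Representatives. -/
abbrev Pre := Σ j : lam, F.obj j

def rel : Pre F → Pre F → Prop := fun a b => ∃ h : a.1 ≤ b.1, tr F h a.2 = b.2

def Z := Quot (rel F)

def mkZ (a : Pre F) : Z F := Quot.mk _ a

lemma mkZ_eq {a : Pre F} {m : lam} (h : a.1 ≤ m) : mkZ F a = mkZ F ⟨m, tr F h a.2⟩ :=
  Quot.sound ⟨h, rfl⟩

def LeRep (a b : Pre F) : Prop :=
  ∃ (m : lam) (hj : a.1 ≤ m) (hk : b.1 ≤ m), tr F hj a.2 ≤ tr F hk b.2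

lemma leRep_raise {a b : Pre F} {m m' : lam} (hm : m ≤ m') {hj : a.1 ≤ m} {hk : b.1 ≤ m}
    (h : tr F hj a.2 ≤ tr F hk b.2) (hj' : a.1 ≤ m') (hk' : b.1 ≤ m') :
    tr F hj' a.2 ≤ tr F hk' b.2 := by
  have h1 := (tr F hm).monotone h
  rwa [tr_tr, tr_tr] at h1

lemma leRep_iff_right {a b b' : Pre F} (h : rel F b b') : LeRep F a b ↔ LeRep F a b' := by
  obtain ⟨hbb, hb2⟩ := h
  constructor
  · rintro ⟨m, hj, hk, hxy⟩
    refine ⟨max m b'.1, hj.trans (le_max_left _ _), le_max_right _ _, ?_⟩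
    have := leRep_raise F (le_max_left m b'.1) hxy (hj.trans (le_max_left _ _))
      (hk.trans (le_max_left _ _))
    refine this.trans (le_of_eq ?_)
    rw [← hb2, tr_tr]
  · rintro ⟨m, hj, hk, hxy⟩
    refine ⟨m, hj, hbb.trans hk, ?_⟩
    refine hxy.trans (le_of_eq ?_)
    rw [← hb2, tr_tr]

lemma leRep_iff_left {a a' b : Pre F} (h : rel F a a') : LeRep F a b ↔ LeRep F a' b := by
  obtain ⟨haa, ha2⟩ := h
  constructor
  · rintro ⟨m, hj, hk, hxy⟩
    refine ⟨max m a'.1, le_max_right _ _, hk.trans (le_max_left _ _), ?_⟩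
    have := leRep_raise F (le_max_left m a'.1) hxy (hj.trans (le_max_left _ _))
      (hk.trans (le_max_left _ _))
    refine le_of_eq ?_ |>.trans this
    rw [← ha2, tr_tr]
  · rintro ⟨m, hj, hk, hxy⟩
    refine ⟨m, haa.trans hj, hk, ?_⟩
    refine le_of_eq ?_ |>.trans hxy
    rw [← ha2, tr_tr]

def leZ : Z F → Z F → Prop :=
  Quot.lift
    (fun a => Quot.lift (fun b => LeRep F a b) (fun _ _ h => propext (leRep_iff_right F h)))
    (fun _ _ h => funext fun b => by
      induction b using Quot.ind with
      | _ b => exact propext (leRep_iff_left F h))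

lemma leZ_mk {a b : Pre F} : leZ F (mkZ F a) (mkZ F b) ↔ LeRep F a b := Iff.rfl

instance : PartialOrder (Z F) where
  le := leZ F
  le_refl p := by
    induction p using Quot.ind with
    | _ a => exact ⟨a.1, le_refl _, le_refl _, le_rfl⟩
  le_trans p q r hpq hqr := by
    induction p using Quot.ind with | _ a => ?_
    induction q using Quot.ind with | _ b => ?_
    induction r using Quot.ind with | _ c => ?_
    obtain ⟨m₁, hj₁, hk₁, h₁⟩ := hpq
    obtain ⟨m₂, hj₂, hk₂, h₂⟩ := hqr
    refine ⟨max m₁ m₂, hj₁.trans (le_max_left _ _), hk₂.trans (le_max_right _ _), ?_⟩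
    exact (leRep_raise F (le_max_left m₁ m₂) h₁ _ (hk₁.trans (le_max_left _ _))).trans
      (leRep_raise F (le_max_right m₁ m₂) h₂ (hj₂.trans (le_max_right _ _)) _)
  le_antisymm p q hpq hqp := by
    induction p using Quot.ind with | _ a => ?_
    induction q using Quot.ind with | _ b => ?_
    obtain ⟨m₁, hj₁, hk₁, h₁⟩ := hpq
    obtain ⟨m₂, hj₂, hk₂, h₂⟩ := hqp
    have e : tr F (hj₁.trans (le_max_left m₁ m₂)) a.2
        = tr F (hk₁.trans (le_max_left m₁ m₂)) b.2 :=
      le_antisymm (leRep_raise F (le_max_left m₁ m₂) h₁ _ _)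
        (leRep_raise F (le_max_right m₁ m₂) h₂ (hj₂.trans (le_max_right _ _))
          (hk₂.trans (le_max_right _ _)))
    calc mkZ F a = mkZ F ⟨max m₁ m₂, tr F (hj₁.trans (le_max_left m₁ m₂)) a.2⟩ :=
          mkZ_eq F _
      _ = mkZ F b := by rw [e]; exact (mkZ_eq F _).symm

lemma eq_rep {a b : Pre F} (h : mkZ F a = mkZ F b) :
    ∃ (m : lam) (hj : a.1 ≤ m) (hk : b.1 ≤ m), tr F hj a.2 = tr F hk b.2 := by
  have h1 : (mkZ F a : Z F) ≤ mkZ F b := le_of_eq h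
  have h2 : (mkZ F b : Z F) ≤ mkZ F a := le_of_eq h.symm
  obtain ⟨m₁, hj₁, hk₁, hle₁⟩ := h1
  obtain ⟨m₂, hj₂, hk₂, hle₂⟩ := h2
  refine ⟨max m₁ m₂, hj₁.trans (le_max_left _ _), hk₁.trans (le_max_left _ _), ?_⟩
  exact le_antisymm (leRep_raise F (le_max_left m₁ m₂) hle₁ _ _)
    (leRep_raise F (le_max_right m₁ m₂) hle₂ (hj₂.trans (le_max_right _ _))
      (hk₂.trans (le_max_right _ _)))

/-- The colimit cocone in `PartOrd`. -/
def ZP : PartOrd.{u} := PartOrd.of (Z F)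

def ι (j : lam) : F.obj j ⟶ ZP F :=
  ConcreteCategory.ofHom (C := PartOrd.{u}) (⟨fun x => mkZ F ⟨j, x⟩, fun x y hxy =>
    ⟨j, le_refl j, le_refl j, (tr F (le_refl j)).monotone hxy⟩⟩ : F.obj j →o ZP F)

lemma ap_ι (j : lam) (x : F.obj j) : ap (ι F j) x = mkZ F ⟨j, x⟩ := rfl

def cocone : Cocone F where
  pt := ZP F
  ι := { app := ι F
         naturality := by
           intro j k f
           refine hom_ext fun x => ?_
           have h : j ≤ k := leOfHom f
           exact (mkZ_eq (F := F) (a := ⟨j, x⟩) (m := k) h).symm }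

lemma cocone_w (s : Cocone F) {j m : lam} (h : j ≤ m) (x : F.obj j) :
    ap (s.ι.app m) (tr F h x) = ap (s.ι.app j) x := by
  have := s.w h.hom
  conv_rhs => rw [← this]
  rfl

def descP (s : Cocone F) : ZP F ⟶ s.pt :=
  ConcreteCategory.ofHom (C := PartOrd.{u}) (⟨Quot.lift (fun a => ap (s.ι.app a.1) a.2) (by
      rintro a b ⟨h, hb⟩
      show ap (s.ι.app a.1) a.2 = ap (s.ι.app b.1) b.2
      rw [← hb, cocone_w F s h]),
   by
    intro p q hpq
    induction p using Quot.ind with | _ a => ?_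
    induction q using Quot.ind with | _ b => ?_
    obtain ⟨m, hj, hk, hxy⟩ := hpq
    show ap (s.ι.app a.1) a.2 ≤ ap (s.ι.app b.1) b.2
    rw [← cocone_w F s hj, ← cocone_w F s hk]
    exact (ap (s.ι.app m)).monotone hxy⟩ : ZP F →o s.pt)

def isColimitCocone : IsColimit (cocone F) where
  desc := descP F
  fac s j := hom_ext fun x => rfl
  uniq s m hm := by
    refine hom_ext fun p => ?_
    induction p using Quot.ind with | _ a => ?_
    exact DFunLike.congr_fun (congrArg (fun (f : F.obj a.1 ⟶ s.pt) => ap f) (hm a.1)) a.2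



/-! ### The Cat side -/

abbrev G : PartOrd.{u} ⥤ Cat.{u, u} := forget₂ PartOrd.{u} Preord.{u} ⋙ preordToCat.{u}

instance (X : PartOrd.{u}) : PartialOrder ↑(G.obj X) := X.str

instance (j : lam) : PartialOrder ↑((F ⋙ G).obj j) := (F.obj j).str

lemma thin_hom {P : Type*} [Preorder P] {a a' b b' : P} (ha : a = a') (hb : b = b')
    (f : a ⟶ b) (g : a' ⟶ b') : f = eqToHom ha ≫ g ≫ eqToHom hb.symm := by
  subst ha; subst hb
  rw [eqToHom_refl, eqToHom_refl, Category.id_comp, Category.comp_id]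
  exact Subsingleton.elim f g

section CatColim

variable (t : Cocone (F ⋙ G))

/-- The legs of the cocone, typed on the posets. -/
def tf (m : lam) : F.obj m ⥤ t.pt := (t.ι.app m).toFunctor

lemma obj_push {j m : lam} (h : j ≤ m) (x : F.obj j) :
    (tf F t m).obj (tr F h x) = (tf F t j).obj x :=
  Functor.congr_obj (congrArg Cat.Hom.toFunctor (t.w h.hom)) x

lemma map_push {j m : lam} (h : j ≤ m) {x y : F.obj j} (f : x ⟶ y) :
    (tf F t j).map f = eqToHom (obj_push F t h x).symm ≫
      (tf F t m).map (homOfLE ((tr F h).monotone (leOfHom f))) ≫ eqToHom (obj_push F t h y) := by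
  have h1 := Functor.congr_hom (congrArg Cat.Hom.toFunctor (t.w h.hom)).symm f
  have h2 : (((F ⋙ G).map h.hom ≫ t.ι.app m)).toFunctor.map f
      = (tf F t m).map (homOfLE ((tr F h).monotone (leOfHom f))) := by
    show (tf F t m).map (((F ⋙ G).map h.hom).toFunctor.map f) = _
    exact congrArg (tf F t m).map (Subsingleton.elim (α := tr F h x ⟶ tr F h y) _ _)
  rw [h2] at h1
  exact h1

def atStage (a b : Pre F) (m : lam) (hj : a.1 ≤ m) (hk : b.1 ≤ m)
    (hxy : tr F hj a.2 ≤ tr F hk b.2) : (tf F t a.1).obj a.2 ⟶ (tf F t b.1).obj b.2 :=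
  eqToHom (obj_push F t hj a.2).symm ≫ (tf F t m).map (homOfLE hxy) ≫
    eqToHom (obj_push F t hk b.2)

lemma atStage_raise (a b : Pre F) (m : lam) (hj : a.1 ≤ m) (hk : b.1 ≤ m)
    (hxy : tr F hj a.2 ≤ tr F hk b.2) {m' : lam} (hm : m ≤ m') (hj' : a.1 ≤ m')
    (hk' : b.1 ≤ m') (hxy' : tr F hj' a.2 ≤ tr F hk' b.2) :
    atStage F t a b m hj hk hxy = atStage F t a b m' hj' hk' hxy' := by
  unfold atStage
  rw [map_push F t hm (homOfLE hxy)]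
  have e1 : tr F hm (tr F hj a.2) = tr F hj' a.2 := tr_tr F hj hm a.2
  have e2 : tr F hm (tr F hk b.2) = tr F hk' b.2 := tr_tr F hk hm b.2
  have h3 : (homOfLE ((tr F hm).monotone (leOfHom (homOfLE hxy))) :
      tr F hm (tr F hj a.2) ⟶ tr F hm (tr F hk b.2))
      = eqToHom e1 ≫ homOfLE hxy' ≫ eqToHom e2.symm := thin_hom e1 e2 _ _
  rw [h3]
  simp only [Functor.map_comp, eqToHom_map, Category.assoc, eqToHom_trans,
    eqToHom_trans_assoc]

lemma atStage_congr (a b a' b' : Pre F) (m : lam) (hj : a.1 ≤ m) (hk : b.1 ≤ m)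
    (hxy : tr F hj a.2 ≤ tr F hk b.2) (hj' : a'.1 ≤ m) (hk' : b'.1 ≤ m)
    (hxy' : tr F hj' a'.2 ≤ tr F hk' b'.2)
    (ea : tr F hj a.2 = tr F hj' a'.2) (eb : tr F hk b.2 = tr F hk' b'.2)
    (Ea : (tf F t a.1).obj a.2 = (tf F t a'.1).obj a'.2)
    (Eb : (tf F t b.1).obj b.2 = (tf F t b'.1).obj b'.2) :
    atStage F t a b m hj hk hxy
      = eqToHom Ea ≫ atStage F t a' b' m hj' hk' hxy' ≫ eqToHom Eb.symm := by
  unfold atStage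
  have h3 : (homOfLE hxy : tr F hj a.2 ⟶ tr F hk b.2)
      = eqToHom ea ≫ homOfLE hxy' ≫ eqToHom eb.symm := thin_hom ea eb _ _
  rw [h3]
  simp only [Functor.map_comp, eqToHom_map, Category.assoc, eqToHom_trans,
    eqToHom_trans_assoc]

lemma atStage_comp (a b c : Pre F) (m : lam) (hj : a.1 ≤ m) (hk : b.1 ≤ m) (hl : c.1 ≤ m)
    (hxy : tr F hj a.2 ≤ tr F hk b.2) (hyz : tr F hk b.2 ≤ tr F hl c.2) :
    atStage F t a b m hj hk hxy ≫ atStage F t b c m hk hl hyz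
      = atStage F t a c m hj hl (hxy.trans hyz) := by
  unfold atStage
  have : (homOfLE hxy ≫ homOfLE hyz : tr F hj a.2 ⟶ tr F hl c.2) = homOfLE (hxy.trans hyz) := rfl
  simp only [Category.assoc, eqToHom_trans_assoc, eqToHom_refl, Category.id_comp]
  rw [← Category.assoc ((tf F t m).map (homOfLE hxy)), ← Functor.map_comp, this]

lemma atStage_id (a : Pre F) (m : lam) (hj : a.1 ≤ m) :
    atStage F t a a m hj hj le_rfl = 𝟙 _ := by
  unfold atStage
  have : (homOfLE (le_rfl : tr F hj a.2 ≤ tr F hj a.2)) = 𝟙 _ := rfl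
  rw [this]
  simp

noncomputable def keyHom (a b : Pre F) (h : LeRep F a b) :
    (tf F t a.1).obj a.2 ⟶ (tf F t b.1).obj b.2 :=
  atStage F t a b h.choose h.choose_spec.choose h.choose_spec.choose_spec.choose
    h.choose_spec.choose_spec.choose_spec

lemma keyHom_eq (a b : Pre F) (h : LeRep F a b) (m : lam) (hj : a.1 ≤ m) (hk : b.1 ≤ m)
    (hxy : tr F hj a.2 ≤ tr F hk b.2) : keyHom F t a b h = atStage F t a b m hj hk hxy := by
  unfold keyHom
  have hxyM := leRep_raise F (le_max_left m h.choose) hxy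
    (hj.trans (le_max_left _ _)) (hk.trans (le_max_left _ _))
  rw [atStage_raise F t a b h.choose _ _ _ (le_max_right m h.choose)
    (hj.trans (le_max_left _ _)) (hk.trans (le_max_left _ _)) hxyM]
  exact (atStage_raise F t a b m hj hk hxy (le_max_left m h.choose) _ _ hxyM).symm

/-- The object part of the descended functor. -/
def objF : Z F → t.pt :=
  Quot.lift (fun a => (tf F t a.1).obj a.2) (by
    rintro a b ⟨h, hb⟩
    show (tf F t a.1).obj a.2 = (tf F t b.1).obj b.2
    rw [← hb]
    exact (obj_push F t h a.2).symm)

noncomputable def rep (p : Z F) : Pre F := (Quot.exists_rep p).choose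

lemma rep_spec (p : Z F) : mkZ F (rep F p) = p := (Quot.exists_rep p).choose_spec

lemma objF_rep (p : Z F) : objF F t p = (tf F t (rep F p).1).obj (rep F p).2 :=
  (congrArg (objF F t) (rep_spec F p)).symm

lemma le_rep {p q : Z F} (hpq : p ≤ q) : LeRep F (rep F p) (rep F q) := by
  rw [← rep_spec F p, ← rep_spec F q] at hpq
  exact hpq

lemma keyHom_congr (a a' b b' : Pre F) (ea : mkZ F a = mkZ F a') (eb : mkZ F b = mkZ F b')
    (h : LeRep F a b) (h' : LeRep F a' b')
    (Ea : (tf F t a.1).obj a.2 = (tf F t a'.1).obj a'.2)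
    (Eb : (tf F t b.1).obj b.2 = (tf F t b'.1).obj b'.2) :
    keyHom F t a b h = eqToHom Ea ≫ keyHom F t a' b' h' ≫ eqToHom Eb.symm := by
  obtain ⟨m₁, pa, pa', e₁⟩ := eq_rep F ea
  obtain ⟨m₂, pb, pb', e₂⟩ := eq_rep F eb
  obtain ⟨m₃, qa, qb, q⟩ := h
  set M := m₁ ⊔ m₂ ⊔ m₃ with hM
  have hm₁ : m₁ ≤ M := (le_max_left _ _).trans (le_max_left _ _)
  have hm₂ : m₂ ≤ M := (le_max_right _ _).trans (le_max_left _ _)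
  have hm₃ : m₃ ≤ M := le_max_right _ _
  have ha : a.1 ≤ M := pa.trans hm₁
  have ha' : a'.1 ≤ M := pa'.trans hm₁
  have hb : b.1 ≤ M := pb.trans hm₂
  have hb' : b'.1 ≤ M := pb'.trans hm₂
  have E₁ : tr F ha a.2 = tr F ha' a'.2 := by
    have := congrArg (tr F hm₁) e₁
    rwa [tr_tr, tr_tr] at this
  have E₂ : tr F hb b.2 = tr F hb' b'.2 := by
    have := congrArg (tr F hm₂) e₂
    rwa [tr_tr, tr_tr] at this
  have hq : tr F ha a.2 ≤ tr F hb b.2 := leRep_raise F hm₃ q ha hb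
  have hq' : tr F ha' a'.2 ≤ tr F hb' b'.2 := by
    rw [← E₁, ← E₂]; exact hq
  rw [keyHom_eq F t a b ⟨m₃, qa, qb, q⟩ M ha hb hq,
    keyHom_eq F t a' b' h' M ha' hb' hq']
  exact atStage_congr F t a b a' b' M ha hb hq ha' hb' hq' E₁ E₂ Ea Eb

/-- The morphism part of the descended functor. -/
noncomputable def mapC {p q : Z F} (hpq : p ≤ q) : objF F t p ⟶ objF F t q :=
  eqToHom (objF_rep F t p) ≫ keyHom F t (rep F p) (rep F q) (le_rep F hpq) ≫
    eqToHom (objF_rep F t q).symm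

lemma mapC_id (p : Z F) : mapC F t (le_refl p) = 𝟙 (objF F t p) := by
  unfold mapC
  rw [keyHom_eq F t _ _ _ (rep F p).1 (le_refl _) (le_refl _) le_rfl, atStage_id]
  simp

lemma mapC_comp {p q r : Z F} (h1 : p ≤ q) (h2 : q ≤ r) :
    mapC F t (h1.trans h2) = mapC F t h1 ≫ mapC F t h2 := by
  unfold mapC
  obtain ⟨m₁, hj₁, hk₁, hle₁⟩ := le_rep F h1
  obtain ⟨m₂, hj₂, hk₂, hle₂⟩ := le_rep F h2
  have ha : (rep F p).1 ≤ m₁ ⊔ m₂ := hj₁.trans (le_max_left _ _)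
  have hb : (rep F q).1 ≤ m₁ ⊔ m₂ := hk₁.trans (le_max_left _ _)
  have hc : (rep F r).1 ≤ m₁ ⊔ m₂ := hk₂.trans (le_max_right _ _)
  have h₁' : tr F ha (rep F p).2 ≤ tr F hb (rep F q).2 :=
    leRep_raise F (le_max_left m₁ m₂) hle₁ ha hb
  have h₂' : tr F hb (rep F q).2 ≤ tr F hc (rep F r).2 :=
    leRep_raise F (le_max_right m₁ m₂) hle₂ hb hc
  rw [keyHom_eq F t _ _ (le_rep F (h1.trans h2)) (m₁ ⊔ m₂) ha hc (h₁'.trans h₂'),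
    keyHom_eq F t _ _ (le_rep F h1) (m₁ ⊔ m₂) ha hb h₁',
    keyHom_eq F t _ _ (le_rep F h2) (m₁ ⊔ m₂) hb hc h₂',
    ← atStage_comp F t _ _ _ (m₁ ⊔ m₂) ha hb hc h₁' h₂']
  simp

/-- The descended functor out of the colimit, into the vertex of a cocone in `Cat`. -/
noncomputable def descC : Z F ⥤ t.pt where
  obj p := objF F t p
  map {p q} f := mapC F t (leOfHom f)
  map_id p := mapC_id F t p
  map_comp {p q r} f g := mapC_comp F t (leOfHom f) (leOfHom g)

lemma descC_map_mk {a b : Pre F} (f : mkZ F a ⟶ mkZ F b)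
    (h : LeRep F a b) : (descC F t).map f = keyHom F t a b h := by
  have : (descC F t).map f = eqToHom (objF_rep F t (mkZ F a)) ≫
      keyHom F t (rep F (mkZ F a)) (rep F (mkZ F b)) (le_rep F (leOfHom f)) ≫
      eqToHom (objF_rep F t (mkZ F b)).symm := rfl
  rw [this, keyHom_congr F t _ a _ b (rep_spec F (mkZ F a)) (rep_spec F (mkZ F b))
    (le_rep F (leOfHom f)) h (objF_rep F t (mkZ F a)).symm (objF_rep F t (mkZ F b)).symm]
  simp
  erw [eqToHom_trans_assoc, eqToHom_refl, Category.id_comp, eqToHom_refl, Category.comp_id]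

lemma push_refl (j : lam) (x y : F.obj j) (hxy : x ≤ y)
    (hh : tr F (le_refl j) x ≤ tr F (le_refl j) y) :
    eqToHom (obj_push F t (le_refl j) x).symm ≫ (tf F t j).map (homOfLE hh) ≫
      eqToHom (obj_push F t (le_refl j) y) = (tf F t j).map (homOfLE hxy) := by
  have e1 : tr F (le_refl j) x = x := tr_refl F x
  have e2 : tr F (le_refl j) y = y := tr_refl F y
  have h3 : (homOfLE hh : tr F (le_refl j) x ⟶ tr F (le_refl j) y)
      = eqToHom e1 ≫ homOfLE hxy ≫ eqToHom e2.symm := thin_hom e1 e2 _ _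
  rw [h3]
  simp only [Functor.map_comp, eqToHom_map, Category.assoc, eqToHom_trans,
    eqToHom_trans_assoc, eqToHom_refl, Category.id_comp, Category.comp_id]

lemma descC_fac (j : lam) : (G.mapCocone (cocone F)).ι.app j ≫ (descC F t).toCatHom = t.ι.app j := by
  show G.map (ι F j) ≫ (descC F t).toCatHom = t.ι.app j
  refine Cat.ext (CategoryTheory.Functor.ext (fun x => rfl) (fun x y f => ?_))
  have h0 : (G.map (ι F j) ≫ (descC F t).toCatHom).toFunctor.map f
      = (descC F t).map ((G.map (ι F j)).toFunctor.map f) := rfl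
  have h : LeRep F ⟨j, x⟩ ⟨j, y⟩ :=
    ⟨j, le_refl j, le_refl j, (tr F (le_refl j)).monotone (leOfHom f)⟩
  refine h0.trans ?_
  erw [descC_map_mk F t ((G.map (ι F j)).toFunctor.map f) h,
    keyHom_eq F t _ _ h j (le_refl j) (le_refl j) ((tr F (le_refl j)).monotone (leOfHom f))]
  unfold atStage
  refine (push_refl F t j x y (leOfHom f) _).trans ?_
  erw [eqToHom_refl, eqToHom_refl, Category.id_comp, Category.comp_id]
  rfl

lemma descC_uniq (Ψ : Z F ⥤ t.pt)
    (hΨ : ∀ j : lam, G.map (ι F j) ≫ Ψ.toCatHom = t.ι.app j) : Ψ = descC F t := by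
  have hobj : ∀ p : Z F, Ψ.obj p = objF F t p := by
    intro p
    induction p using Quot.ind with
    | _ a => exact Functor.congr_obj (congrArg Cat.Hom.toFunctor (hΨ a.1)) a.2
  refine CategoryTheory.Functor.ext hobj (fun p q f => ?_)
  obtain ⟨m, hj, hk, hxy⟩ := le_rep F (leOfHom f)
  have e1 : p = mkZ F ⟨m, tr F hj (rep F p).2⟩ := (rep_spec F p).symm.trans (mkZ_eq F hj)
  have e2 : q = mkZ F ⟨m, tr F hk (rep F q).2⟩ := (rep_spec F q).symm.trans (mkZ_eq F hk)
  have hZ : mkZ F ⟨m, tr F hj (rep F p).2⟩ ≤ mkZ F ⟨m, tr F hk (rep F q).2⟩ :=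
    ⟨m, le_refl m, le_refl m, (tr F (le_refl m)).monotone hxy⟩
  have hf : f = eqToHom e1 ≫ homOfLE hZ ≫ eqToHom e2.symm := thin_hom e1 e2 _ _
  have q1 : Ψ.obj (mkZ F ⟨m, tr F hj (rep F p).2⟩) = (tf F t m).obj (tr F hj (rep F p).2) :=
    hobj (mkZ F ⟨m, tr F hj (rep F p).2⟩)
  have q2 : (tf F t m).obj (tr F hk (rep F q).2) = Ψ.obj (mkZ F ⟨m, tr F hk (rep F q).2⟩) :=
    (hobj (mkZ F ⟨m, tr F hk (rep F q).2⟩)).symm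
  have h5 : Ψ.map (homOfLE hZ) = eqToHom q1 ≫ (tf F t m).map (homOfLE hxy) ≫ eqToHom q2 :=
    Functor.congr_hom (congrArg Cat.Hom.toFunctor (hΨ m)) (homOfLE hxy)
  change Ψ.map f = eqToHom (hobj p) ≫ (eqToHom (objF_rep F t p) ≫
      keyHom F t (rep F p) (rep F q) (le_rep F (leOfHom f)) ≫
      eqToHom (objF_rep F t q).symm) ≫ eqToHom (hobj q).symm
  rw [keyHom_eq F t _ _ _ m hj hk hxy]
  unfold atStage
  rw [hf]
  simp only [Functor.map_comp, eqToHom_map]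
  rw [h5]
  simp only [Category.assoc, eqToHom_trans, eqToHom_trans_assoc, eqToHom_refl,
    Category.id_comp, Category.comp_id]

/-- The mapped cocone is a colimit in `Cat`. -/
noncomputable def isColimitMapped : IsColimit (G.mapCocone (cocone F)) where
  desc t := (descC F t).toCatHom
  fac t j := descC_fac F t j
  uniq t Ψ hΨ := Cat.ext (descC_uniq F t Ψ.toFunctor (fun j => hΨ j))

end CatColim

end PartOrdSeqColim

theorem partOrd_to_cat_preserves_sequential_colimits
    (lam : Type u) [LinearOrder lam] [IsWellOrder lam (· < ·)] :
    Nonempty (PreservesColimitsOfShape lam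
      (forget₂ PartOrd.{u} Preord.{u} ⋙ preordToCat.{u})) := by
  refine ⟨⟨fun {K} => ?_⟩⟩
  exact preservesColimit_of_preserves_colimit_cocone
    (PartOrdSeqColim.isColimitCocone K) (PartOrdSeqColim.isColimitMapped K)
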